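/- Let A be a unital C*-algebra, n ≥ 3 and k ≥ 1 integers, and p a family as in the context (a representation of Mor⁺(K_nᵏ, K_n)). Let S ⊆ Fin k, let 𝐱, 𝐲 : Fin k → Fin n satisfy 𝐱(i) = 𝐲(i) if and only if i ∈ S, and set Π_S := Σ_{a ∈ Fin n} p(𝐱, a) · p(𝐲, a). If 𝐳, 𝐳' : Fin k → Fin n satisfy 𝐳(i) = 𝐳'(i) for all i ∈ S, then Π_S · p(𝐳, b) = Π_S · p(𝐳', b) for every b ∈ Fin n; i.e., Π_S · p(𝐳, b) does not depend on the values of 𝐳 at coordinates outside S. -/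
import Mathlib

open Finset Function

namespace Stmt5Aux

variable {A : Type*} [CStarAlgebra A] {n k : ℕ}

lemma exists_ne_pair (hn : 3 ≤ n) (a b : Fin n) : ∃ v : Fin n, v ≠ a ∧ v ≠ b := by
  by_contra h
  push_neg at h
  have hsub : (Finset.univ : Finset (Fin n)) ⊆ {a, b} := by
    intro v _
    rcases eq_or_ne v a with rfl | hv
    · simp
    · simp [h v hv]
  have h1 := Finset.card_le_card hsub
  have h2 : ({a, b} : Finset (Fin n)).card ≤ 2 :=
    (Finset.card_insert_le _ _).trans (by simp)
  simp [Finset.card_univ] at h1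
  omega

lemma exists_equiv_prescribe {a b : Fin n} (hab : a ≠ b) (t0 t1 : Fin n) (ht : t0 ≠ t1) :
    ∃ e : Fin n ≃ Fin n, e t0 = a ∧ e t1 = b := by
  set τ := Equiv.swap t0 a with hτ
  set w := τ.symm b with hw
  have hw0 : w ≠ t0 := by
    intro h
    apply hab
    have h2 : τ w = b := Equiv.apply_symm_apply τ b
    rw [h] at h2
    simp only [τ, Equiv.swap_apply_left] at h2
    exact h2
  refine ⟨(Equiv.swap t1 w).trans τ, ?_, ?_⟩
  · rw [Equiv.trans_apply, Equiv.swap_apply_of_ne_of_ne ht (Ne.symm hw0)]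
    simp [τ, Equiv.swap_apply_left]
  · rw [Equiv.trans_apply, Equiv.swap_apply_left]
    simp [hw]

lemma sum_star_eq_zero {ι : Type*} (s : Finset ι) (f : ι → A)
    (h : ∑ i ∈ s, star (f i) * f i = 0) : ∀ i ∈ s, f i = 0 := by
  letI := CStarAlgebra.spectralOrder A
  haveI := CStarAlgebra.spectralOrderedRing A
  intro i hi
  have h0 : ∀ j ∈ s, (0 : A) ≤ star (f j) * f j := fun j _ => star_mul_self_nonneg _
  have h1 := (Finset.sum_eq_zero_iff_of_nonneg h0).mp h i hi
  exact (CStarRing.star_mul_self_eq_zero_iff _).mp h1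

structure QRep (A : Type*) [CStarAlgebra A] (n k : ℕ) where
  p : (Fin k → Fin n) → Fin n → A
  idem : ∀ x a, p x a * p x a = p x a
  sa : ∀ x a, star (p x a) = p x a
  sum_one : ∀ x, ∑ a, p x a = 1
  orth : ∀ x y a, (∀ i, x i ≠ y i) → p x a * p y a = 0

namespace QRep

variable (R : QRep A n k)

lemma rowOrth (x : Fin k → Fin n) {a b : Fin n} (hab : a ≠ b) : R.p x a * R.p x b = 0 := by
  have key : ∑ c ∈ Finset.univ.erase b, star (R.p x c * R.p x b) * (R.p x c * R.p x b) = 0 := by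
    have e1 : ∀ c, star (R.p x c * R.p x b) * (R.p x c * R.p x b)
        = R.p x b * (R.p x c * R.p x b) := by
      intro c
      rw [star_mul, R.sa, R.sa]
      rw [show R.p x b * R.p x c * (R.p x c * R.p x b) = R.p x b * ((R.p x c * R.p x c) * R.p x b) by
        simp only [mul_assoc]]
      rw [R.idem]
    simp_rw [e1]
    rw [← Finset.mul_sum, ← Finset.sum_mul]
    have e2 : ∑ c ∈ Finset.univ.erase b, R.p x c = 1 - R.p x b := by
      have := Finset.add_sum_erase Finset.univ (R.p x) (Finset.mem_univ b)
      rw [R.sum_one] at this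
      exact eq_sub_of_add_eq' this
    rw [e2]
    rw [sub_mul, one_mul, R.idem, sub_self, mul_zero]
  have := sum_star_eq_zero _ _ key a (by simp [hab])
  -- this : R.p x a * R.p x b = 0
  exact this


lemma cliqueSum (hn : 3 ≤ n) (c : Fin n → Fin k → Fin n)
    (hc : ∀ t t', t ≠ t' → ∀ i, c t i ≠ c t' i) (a : Fin n) :
    ∑ t, R.p (c t) a = 1 := by
  set q : Fin n → A := fun a => ∑ t, R.p (c t) a with hq
  have hqi : ∀ a, q a * q a = q a := by
    intro a
    rw [hq]
    simp only
    rw [Finset.sum_mul]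
    refine Finset.sum_congr rfl fun t _ => ?_
    rw [Finset.mul_sum]
    rw [Finset.sum_eq_single t]
    · exact R.idem _ _
    · intro t' _ hne
      exact R.orth _ _ _ (hc t t' (Ne.symm hne))
    · intro h; exact absurd (Finset.mem_univ t) h
  have hqsa : ∀ a, star (q a) = q a := by
    intro a
    rw [hq]
    simp only [star_sum]
    exact Finset.sum_congr rfl fun t _ => R.sa _ _
  have hsum' : ∑ a, ((1 : A) - q a) = 0 := by
    rw [Finset.sum_sub_distrib]
    have h1 : ∑ _a : Fin n, (1 : A) = (n : ℕ) • (1 : A) := by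
      simp
    have h2 : ∑ a, q a = (n : ℕ) • (1 : A) := by
      rw [hq]
      simp only
      rw [Finset.sum_comm]
      simp [R.sum_one]
    rw [h1, h2, sub_self]
  have key : ∑ a, star ((1 : A) - q a) * ((1 : A) - q a) = 0 := by
    have e : ∀ a, star ((1 : A) - q a) * ((1 : A) - q a) = (1 : A) - q a := by
      intro a
      rw [star_sub, star_one, hqsa]
      rw [sub_mul, one_mul, mul_sub, mul_one, hqi]
      abel
    simp_rw [e]
    exact hsum'
  have := sum_star_eq_zero _ _ key a (Finset.mem_univ a)
  have : q a = 1 := by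
    have h := sub_eq_zero.mp this
    exact h.symm
  exact this

/-- The key "trade" identity: two cliques sharing `n - 2` vertices. -/
lemma pairTrade (hn : 3 ≤ n) (z : Fin k → Fin n) (j : Fin k) (c : Fin n) (hc : c ≠ z j)
    (m : Fin k → Fin n) (hm : ∀ i, i ≠ j → m i ≠ z i) (b : Fin n) :
    R.p z b + R.p (update m j c) b
      = R.p (update z j c) b + R.p (update m j (z j)) b := by
  set v : Fin k → Fin n := update m j c with hv
  have hzv : ∀ i, z i ≠ v i := by
    intro i
    rcases eq_or_ne i j with rfl | hij
    · simpa [hv] using Ne.symm hc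
    · rw [hv, update_of_ne hij]
      exact Ne.symm (hm i hij)
  set t0 : Fin n := ⟨0, by omega⟩ with ht0
  set t1 : Fin n := ⟨1, by omega⟩ with ht1
  have h01 : t0 ≠ t1 := by simp [ht0, ht1, Fin.ext_iff]
  choose E hE0 hE1 using fun i => exists_equiv_prescribe (hzv i) t0 t1 h01
  set C : Fin n → Fin k → Fin n := fun t i => E i t with hC
  set C' : Fin n → Fin k → Fin n :=
    fun t i => if i = j then E j (Equiv.swap t0 t1 t) else E i t with hC'
  have hcl : ∀ t t', t ≠ t' → ∀ i, C t i ≠ C t' i := fun t t' h i => (E i).injective.ne h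
  have hcl' : ∀ t t', t ≠ t' → ∀ i, C' t i ≠ C' t' i := by
    intro t t' h i
    rcases eq_or_ne i j with rfl | hij
    · simp only [hC', if_pos rfl]
      exact (E i).injective.ne ((Equiv.swap t0 t1).injective.ne h)
    · simp only [hC', if_neg hij]
      exact (E i).injective.ne h
  have h1 := R.cliqueSum hn C hcl b
  have h2 := R.cliqueSum hn C' hcl' b
  have hdiff : ∀ t, t ≠ t0 → t ≠ t1 → C t = C' t := by
    intro t h0 h1'
    funext i
    rcases eq_or_ne i j with rfl | hij
    · simp only [hC, hC', if_pos rfl, Equiv.swap_apply_of_ne_of_ne h0 h1']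
    · simp only [hC, hC', if_neg hij]
  have hC0 : C t0 = z := funext fun i => hE0 i
  have hC1 : C t1 = v := funext fun i => hE1 i
  have hC'0 : C' t0 = update z j c := by
    funext i
    rcases eq_or_ne i j with rfl | hij
    · simp only [hC', if_pos rfl, Equiv.swap_apply_left, update_self]
      rw [hE1 i, hv, update_self]
    · simp only [hC', if_neg hij, update_of_ne hij]
      exact hE0 i
  have hC'1 : C' t1 = update m j (z j) := by
    funext i
    rcases eq_or_ne i j with rfl | hij
    · simp only [hC', if_pos rfl, Equiv.swap_apply_right, update_self]
      exact hE0 i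
    · simp only [hC', if_neg hij, update_of_ne hij]
      rw [hE1 i, hv, update_of_ne hij]
  have hzero : ∑ t, (R.p (C t) b - R.p (C' t) b) = 0 := by
    rw [Finset.sum_sub_distrib, h1, h2, sub_self]
  have hsub : ∑ t, (R.p (C t) b - R.p (C' t) b)
      = ∑ t ∈ ({t0, t1} : Finset (Fin n)), (R.p (C t) b - R.p (C' t) b) := by
    refine (Finset.sum_subset (Finset.subset_univ _) ?_).symm
    intro t _ ht
    simp only [Finset.mem_insert, Finset.mem_singleton, not_or] at ht
    rw [hdiff t ht.1 ht.2, sub_self]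
  rw [hsub, Finset.sum_pair h01, hC0, hC1, hC'0, hC'1] at hzero
  have := sub_eq_zero.mp (by
    have : (R.p z b + R.p v b) - (R.p (update z j c) b + R.p (update m j (z j)) b) = 0 := by
      rw [← hzero]; abel
    exact this)
  exact this


/-- `F x y = ∑ a, p x a * p y a`. -/
def F (x y : Fin k → Fin n) : A := ∑ a, R.p x a * R.p y a

lemma F_eq_zero {x y : Fin k → Fin n} (h : ∀ i, x i ≠ y i) : R.F x y = 0 :=
  Finset.sum_eq_zero fun a _ => R.orth x y a h

lemma moveR (hn : 3 ≤ n) {x y : Fin k → Fin n} (j : Fin k) (c : Fin n)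
    (h1 : x j ≠ y j) (h2 : x j ≠ c) : R.F x y = R.F x (update y j c) := by
  rcases eq_or_ne c (y j) with rfl | hc
  · rw [update_eq_self]
  choose m hm1 hm2 using fun i => exists_ne_pair hn (x i) (y i)
  have key := R.pairTrade hn y j c hc m (fun i hij => hm2 i) 
  rw [← sub_eq_zero]
  unfold F
  rw [← Finset.sum_sub_distrib]
  have e : ∀ a, R.p x a * R.p y a - R.p x a * R.p (update y j c) a
      = R.p x a * R.p (update m j (y j)) a - R.p x a * R.p (update m j c) a := by
    intro a
    rw [← mul_sub, ← mul_sub]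
    congr 1
    rw [sub_eq_sub_iff_add_eq_add]
    exact (key a).trans (add_comm _ _)
  rw [Finset.sum_congr rfl fun a _ => e a]
  apply Finset.sum_eq_zero
  intro a _
  have adj1 : ∀ i, x i ≠ update m j (y j) i := by
    intro i
    rcases eq_or_ne i j with rfl | hij
    · rwa [update_self]
    · rw [update_of_ne hij]; exact Ne.symm (hm1 i)
  have adj2 : ∀ i, x i ≠ update m j c i := by
    intro i
    rcases eq_or_ne i j with rfl | hij
    · rwa [update_self]
    · rw [update_of_ne hij]; exact Ne.symm (hm1 i)
  rw [R.orth _ _ _ adj1, R.orth _ _ _ adj2, sub_self]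

lemma moveL (hn : 3 ≤ n) {x y : Fin k → Fin n} (j : Fin k) (c : Fin n)
    (h1 : x j ≠ y j) (h2 : c ≠ y j) : R.F x y = R.F (update x j c) y := by
  rcases eq_or_ne c (x j) with rfl | hc
  · rw [update_eq_self]
  choose m hm1 hm2 using fun i => exists_ne_pair hn (x i) (y i)
  have key := R.pairTrade hn x j c hc m (fun i hij => hm1 i)
  rw [← sub_eq_zero]
  unfold F
  rw [← Finset.sum_sub_distrib]
  have e : ∀ a, R.p x a * R.p y a - R.p (update x j c) a * R.p y a
      = R.p (update m j (x j)) a * R.p y a - R.p (update m j c) a * R.p y a := by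
    intro a
    rw [← sub_mul, ← sub_mul]
    congr 1
    rw [sub_eq_sub_iff_add_eq_add]
    exact (key a).trans (add_comm _ _)
  rw [Finset.sum_congr rfl fun a _ => e a]
  apply Finset.sum_eq_zero
  intro a _
  have adj1 : ∀ i, update m j (x j) i ≠ y i := by
    intro i
    rcases eq_or_ne i j with rfl | hij
    · rwa [update_self]
    · rw [update_of_ne hij]; exact hm2 i
  have adj2 : ∀ i, update m j c i ≠ y i := by
    intro i
    rcases eq_or_ne i j with rfl | hij
    · rwa [update_self]
    · rw [update_of_ne hij]; exact hm2 i
  rw [R.orth _ _ _ adj1, R.orth _ _ _ adj2, sub_self]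

lemma chainR (hn : 3 ≤ n) (x : Fin k → Fin n) (T : Finset (Fin k)) :
    ∀ y y' : Fin k → Fin n, (∀ i, i ∉ T → y i = y' i) →
    (∀ i, y i ≠ y' i → x i ≠ y i ∧ x i ≠ y' i) → R.F x y = R.F x y' := by
  induction T using Finset.induction_on with
  | empty =>
    intro y y' h _
    rw [funext fun i => h i (by simp)]
  | @insert j T' hj ih =>
    intro y y' h hcond
    by_cases hyy : y j = y' j
    · apply ih y y' ?_ hcond
      intro i hi
      rcases eq_or_ne i j with rfl | hij
      · exact hyy
      · exact h i (by simp [hij, hi])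
    · have step : R.F x y = R.F x (update y j (y' j)) :=
        R.moveR hn j (y' j) (hcond j hyy).1 (hcond j hyy).2
      rw [step]
      apply ih (update y j (y' j)) y'
      · intro i hi
        rcases eq_or_ne i j with rfl | hij
        · simp
        · rw [update_of_ne hij]; exact h i (by simp [hij, hi])
      · intro i hne
        have hij : i ≠ j := by rintro rfl; simp at hne
        rw [update_of_ne hij] at hne ⊢
        exact hcond i hne

lemma chainL (hn : 3 ≤ n) (y : Fin k → Fin n) (T : Finset (Fin k)) :
    ∀ x x' : Fin k → Fin n, (∀ i, i ∉ T → x i = x' i) →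
    (∀ i, x i ≠ x' i → x i ≠ y i ∧ x' i ≠ y i) → R.F x y = R.F x' y := by
  induction T using Finset.induction_on with
  | empty =>
    intro x x' h _
    rw [funext fun i => h i (by simp)]
  | @insert j T' hj ih =>
    intro x x' h hcond
    by_cases hxx : x j = x' j
    · apply ih x x' ?_ hcond
      intro i hi
      rcases eq_or_ne i j with rfl | hij
      · exact hxx
      · exact h i (by simp [hij, hi])
    · have step : R.F x y = R.F (update x j (x' j)) y :=
        R.moveL hn j (x' j) (hcond j hxx).1 ((hcond j hxx).2)
      rw [step]
      apply ih (update x j (x' j)) x'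
      · intro i hi
        rcases eq_or_ne i j with rfl | hij
        · simp
        · rw [update_of_ne hij]; exact h i (by simp [hij, hi])
      · intro i hne
        have hij : i ≠ j := by rintro rfl; simp at hne
        rw [update_of_ne hij] at hne ⊢
        exact hcond i hne


/-- `F x y` depends only on `S` and the common values on `S`. -/
lemma normF (hn : 3 ≤ n) {S : Finset (Fin k)} {x y x' y' : Fin k → Fin n}
    (hxy : ∀ i, x i = y i ↔ i ∈ S) (hxy' : ∀ i, x' i = y' i ↔ i ∈ S)
    (hvals : ∀ i ∈ S, x i = x' i) : R.F x y = R.F x' y' := by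
  choose m hm1 hm2 using fun i => exists_ne_pair hn (x i) (x' i)
  set w : Fin k → Fin n := fun i => if i ∈ S then x i else m i with hw
  have h1 : R.F x y = R.F x w := by
    apply R.chainR hn x Finset.univ y w (fun i hi => absurd (Finset.mem_univ i) hi)
    intro i hne
    by_cases hiS : i ∈ S
    · exfalso; apply hne
      simp only [hw, if_pos hiS]
      exact ((hxy i).mpr hiS).symm
    · constructor
      · exact fun he => hiS ((hxy i).mp he)
      · simp only [hw, if_neg hiS]; exact Ne.symm (hm1 i)
  have h2 : R.F x w = R.F x' w := by
    apply R.chainL hn w Finset.univ x x' (fun i hi => absurd (Finset.mem_univ i) hi)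
    intro i hne
    by_cases hiS : i ∈ S
    · exact absurd (hvals i hiS) hne
    · simp only [hw, if_neg hiS]
      exact ⟨Ne.symm (hm1 i), Ne.symm (hm2 i)⟩
  have h3 : R.F x' w = R.F x' y' := by
    apply R.chainR hn x' Finset.univ w y' (fun i hi => absurd (Finset.mem_univ i) hi)
    intro i hne
    by_cases hiS : i ∈ S
    · exfalso; apply hne
      have hwx : w i = x i := by simp only [hw, if_pos hiS]
      rw [hwx, hvals i hiS]
      exact (hxy' i).mpr hiS
    · constructor
      · simp only [hw, if_neg hiS]; exact Ne.symm (hm2 i)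
      · exact fun he => hiS ((hxy' i).mp he)
  rw [h1, h2, h3]

/-- The dagger identity: for a pair agreeing exactly at `j`,
`F x y + F x (update x j β) = 1`. -/
lemma dagger (hn : 3 ≤ n) {x y : Fin k → Fin n} (j : Fin k) (hj : x j = y j)
    (hoff : ∀ i, i ≠ j → x i ≠ y i) {β : Fin n} (hβ : β ≠ x j) :
    R.F x y + R.F x (update x j β) = 1 := by
  have hne : ∀ i, y i ≠ update x j β i := by
    intro i
    rcases eq_or_ne i j with rfl | hij
    · rw [update_self, ← hj]; exact fun h => hβ h.symm
    · rw [update_of_ne hij]; exact Ne.symm (hoff i hij)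
  set t0 : Fin n := ⟨0, by omega⟩ with ht0
  set t1 : Fin n := ⟨1, by omega⟩ with ht1
  have h01 : t0 ≠ t1 := by simp [ht0, ht1, Fin.ext_iff]
  choose E hE0 hE1 using fun i => exists_equiv_prescribe (hne i) t0 t1 h01
  set C : Fin n → Fin k → Fin n := fun t i => E i t with hC
  have hcl : ∀ t t', t ≠ t' → ∀ i, C t i ≠ C t' i := fun t t' h i => (E i).injective.ne h
  have hC0 : C t0 = y := funext fun i => hE0 i
  have hC1 : C t1 = update x j β := funext fun i => hE1 i
  have hadj : ∀ t, t ≠ t0 → t ≠ t1 → ∀ i, x i ≠ C t i := by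
    intro t h0 h1 i
    rcases eq_or_ne i j with rfl | hij
    · have h2 : C t i ≠ y i := by
        rw [← hE0 i]; exact (E i).injective.ne h0
      rw [hj]; exact Ne.symm h2
    · have h2 : C t i ≠ x i := by
        have e : E i t1 = x i := by rw [hE1 i, update_of_ne hij]
        rw [← e]; exact (E i).injective.ne h1
      exact Ne.symm h2
  have hsum1 : ∑ t, R.F x (C t) = 1 := by
    unfold F
    rw [Finset.sum_comm]
    have : ∀ a, ∑ t, R.p x a * R.p (C t) a = R.p x a := by
      intro a
      rw [← Finset.mul_sum, R.cliqueSum hn C hcl a, mul_one]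
    rw [Finset.sum_congr rfl fun a _ => this a]
    exact R.sum_one x
  have hsub : ∑ t, R.F x (C t) = ∑ t ∈ ({t0, t1} : Finset (Fin n)), R.F x (C t) := by
    refine (Finset.sum_subset (Finset.subset_univ _) ?_).symm
    intro t _ ht
    simp only [Finset.mem_insert, Finset.mem_singleton, not_or] at ht
    exact R.F_eq_zero (hadj t ht.1 ht.2)
  rw [hsub, Finset.sum_pair h01, hC0, hC1] at hsum1
  exact hsum1


/-- Exact agreement at the singleton `{j}` as an `iff` statement. -/
lemma exact_singleton {u v : Fin k → Fin n} {j : Fin k} (h1 : u j = v j)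
    (h2 : ∀ i, i ≠ j → u i ≠ v i) : ∀ i, u i = v i ↔ i ∈ ({j} : Finset (Fin k)) := by
  intro i
  rcases eq_or_ne i j with rfl | hij
  · simp [h1]
  · simp [hij, h2 i hij]

/-- Singleton value-independence. -/
lemma svi (hn : 3 ≤ n) {j : Fin k} {x y x' y' : Fin k → Fin n}
    (hxyj : x j = y j) (hoff : ∀ i, i ≠ j → x i ≠ y i)
    (hxyj' : x' j = y' j) (hoff' : ∀ i, i ≠ j → x' i ≠ y' i) :
    R.F x y = R.F x' y' := by
  rcases eq_or_ne (x j) (x' j) with hv | hv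
  · exact R.normF hn (exact_singleton hxyj hoff) (exact_singleton hxyj' hoff')
      (fun i hi => by rw [Finset.mem_singleton] at hi; subst hi; exact hv)
  · obtain ⟨β, hβ1, hβ2⟩ := exists_ne_pair hn (x j) (x' j)
    set x'' : Fin k → Fin n := update x j (x' j) with hx''
    set y'' : Fin k → Fin n := update y j (x' j) with hy''
    have hj'' : x'' j = y'' j := by simp [hx'', hy'']
    have hoff'' : ∀ i, i ≠ j → x'' i ≠ y'' i := by
      intro i hij
      simp only [hx'', hy'', update_of_ne hij]
      exact hoff i hij
    have h1 : R.F x y = 1 - R.F x (update x j β) :=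
      eq_sub_of_add_eq (R.dagger hn j hxyj hoff hβ1)
    have h2 : R.F x' y' = R.F x'' y'' :=
      R.normF hn (exact_singleton hxyj' hoff') (exact_singleton hj'' hoff'')
        (fun i hi => by rw [Finset.mem_singleton] at hi; subst hi; simp [hx''])
    have h3 : R.F x'' y'' = 1 - R.F x'' (update x'' j β) := by
      refine eq_sub_of_add_eq (R.dagger hn j hj'' hoff'' ?_)
      simp only [hx'', update_self]
      exact hβ2
    have h4 : update x'' j β = update x j β := by
      simp [hx'', Function.update_idem]
    have h5 : R.F x (update x j β) = R.F x'' (update x j β) := by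
      apply R.moveL hn j (x' j)
      · rw [update_self]; exact Ne.symm hβ1
      · rw [update_self]; exact Ne.symm hβ2
    rw [h1, h2, h3, h4, ← h5]

/-- Changing the common value at a single coordinate of `S`. -/
lemma vc1 (hn : 3 ≤ n) {S : Finset (Fin k)} {x y : Fin k → Fin n}
    (hxy : ∀ i, x i = y i ↔ i ∈ S) (i0 : Fin k) (hi0 : i0 ∈ S) (c : Fin n) :
    R.F x y = R.F (update x i0 c) (update y i0 c) := by
  have hEq : x i0 = y i0 := (hxy i0).mpr hi0
  rcases eq_or_ne c (x i0) with rfl | hc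
  · rw [update_eq_self, hEq, update_eq_self]
  have hc' : c ≠ y i0 := by rwa [← hEq]
  choose m hm1 hm2 using fun i => exists_ne_pair hn (x i) (y i)
  set v : Fin k → Fin n := update m i0 c with hv
  set v' : Fin k → Fin n := update m i0 (x i0) with hv'
  set x' : Fin k → Fin n := update x i0 c with hx'
  set y' : Fin k → Fin n := update y i0 c with hy'
  have key1 : ∀ b, R.p y b + R.p v b = R.p y' b + R.p v' b := by
    intro b
    have := R.pairTrade hn y i0 c hc' m (fun i hij => hm2 i) b
    rwa [← hEq] at this
  have key2 : ∀ b, R.p x b + R.p v b = R.p x' b + R.p v' b :=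
    fun b => R.pairTrade hn x i0 c hc m (fun i hij => hm1 i) b
  have adjxv : ∀ i, x i ≠ v i := by
    intro i
    rcases eq_or_ne i i0 with rfl | hij
    · rw [hv, update_self]; exact Ne.symm hc
    · rw [hv, update_of_ne hij]; exact Ne.symm (hm1 i)
  have adjvy' : ∀ i, v' i ≠ y' i := by
    intro i
    rcases eq_or_ne i i0 with rfl | hij
    · rw [hv', hy', update_self, update_self]; exact fun h => hc h.symm
    · rw [hv', hy', update_of_ne hij, update_of_ne hij]; exact hm2 i
  have ha : R.F x y = R.F x y' + R.F x v' := by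
    have e : ∀ a, R.p x a * R.p y a
        = R.p x a * R.p y' a + R.p x a * R.p v' a - R.p x a * R.p v a := by
      intro a
      rw [← mul_add, ← mul_sub]
      congr 1
      rw [eq_sub_iff_add_eq]
      exact key1 a
    unfold F
    rw [Finset.sum_congr rfl fun a _ => e a]
    rw [Finset.sum_sub_distrib, Finset.sum_add_distrib]
    have hz : ∑ a, R.p x a * R.p v a = 0 :=
      Finset.sum_eq_zero fun a _ => R.orth _ _ _ adjxv
    rw [hz, sub_zero]
  have hb : R.F x y' = R.F x' y' - R.F v y' := by
    have e : ∀ a, R.p x a * R.p y' a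
        = R.p x' a * R.p y' a + R.p v' a * R.p y' a - R.p v a * R.p y' a := by
      intro a
      rw [← add_mul, ← sub_mul]
      congr 1
      rw [eq_sub_iff_add_eq]
      exact key2 a
    unfold F
    rw [Finset.sum_congr rfl fun a _ => e a]
    rw [Finset.sum_sub_distrib, Finset.sum_add_distrib]
    have hz : ∑ a, R.p v' a * R.p y' a = 0 :=
      Finset.sum_eq_zero fun a _ => R.orth _ _ _ adjvy'
    rw [hz, add_zero]
  have hsvi : R.F x v' = R.F v y' := by
    apply R.svi hn (j := i0)
    · rw [hv', update_self]
    · intro i hij; rw [hv', update_of_ne hij]; exact Ne.symm (hm1 i)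
    · rw [hv, hy', update_self, update_self]
    · intro i hij; rw [hv, hy', update_of_ne hij, update_of_ne hij]; exact hm2 i
  rw [ha, hb, hsvi]
  abel


/-- Full pair-independence: `F x y` depends only on `S`. -/
lemma propF (hn : 3 ≤ n) {S : Finset (Fin k)} {x' y' : Fin k → Fin n}
    (hxy' : ∀ i, x' i = y' i ↔ i ∈ S) (T : Finset (Fin k)) :
    ∀ x y : Fin k → Fin n, (∀ i, x i = y i ↔ i ∈ S) →
    (∀ i ∈ S, i ∉ T → x i = x' i) → R.F x y = R.F x' y' := by
  induction T using Finset.induction_on with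
  | empty =>
    intro x y hxy hval
    exact R.normF hn hxy hxy' (fun i hi => hval i hi (by simp))
  | @insert j T' hj ih =>
    intro x y hxy hval
    by_cases hcase : j ∈ S ∧ x j ≠ x' j
    · obtain ⟨hjS, hne⟩ := hcase
      rw [R.vc1 hn hxy j hjS (x' j)]
      apply ih (update x j (x' j)) (update y j (x' j))
      · intro i
        rcases eq_or_ne i j with rfl | hij
        · simp [hjS]
        · rw [update_of_ne hij, update_of_ne hij]; exact hxy i
      · intro i hi hiT'
        rcases eq_or_ne i j with rfl | hij
        · rw [update_self]
        · rw [update_of_ne hij]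
          exact hval i hi (by simp [hij, hiT'])
    · apply ih x y hxy
      intro i hi hiT'
      rcases eq_or_ne i j with rfl | hij
      · by_contra hne
        exact hcase ⟨hi, hne⟩
      · exact hval i hi (by simp [hij, hiT'])

/-- Single-step version of the main theorem. -/
lemma stepB (hn : 3 ≤ n) {S : Finset (Fin k)} {x y : Fin k → Fin n}
    (hxy : ∀ i, x i = y i ↔ i ∈ S) {j : Fin k} (hjS : j ∉ S) (c : Fin n)
    (z : Fin k → Fin n) (b : Fin n) :
    R.F x y * R.p z b = R.F x y * R.p (update z j c) b := by
  rcases eq_or_ne c (z j) with rfl | hczj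
  · rw [update_eq_self]
  set z' : Fin k → Fin n := update z j c with hz'
  choose xs hxs1 hxs2 using fun i => exists_ne_pair hn (z i) (z' i)
  set xstar : Fin k → Fin n := fun i => if i ∈ S then z i else xs i with hxst
  have hx1 : ∀ i, xstar i = z i ↔ i ∈ S := by
    intro i
    by_cases hiS : i ∈ S
    · simp [hxst, hiS]
    · simp only [hxst, if_neg hiS]
      exact iff_of_false (hxs1 i) hiS
  have hzz' : ∀ i ∈ S, z i = z' i := by
    intro i hi
    have hij : i ≠ j := fun h => hjS (h ▸ hi)
    rw [hz', update_of_ne hij]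
  have hx2 : ∀ i, xstar i = z' i ↔ i ∈ S := by
    intro i
    by_cases hiS : i ∈ S
    · simp only [hxst, if_pos hiS, hzz' i hiS, hiS]
    · simp only [hxst, if_neg hiS]
      exact iff_of_false (hxs2 i) hiS
  have e1 : R.F x y = R.F xstar z :=
    R.propF hn hx1 Finset.univ x y hxy (fun i hi h => absurd (Finset.mem_univ i) h)
  have e2 : R.F x y = R.F xstar z' :=
    R.propF hn hx2 Finset.univ x y hxy (fun i hi h => absurd (Finset.mem_univ i) h)
  have red : ∀ w : Fin k → Fin n, R.F xstar w * R.p w b = R.p xstar b * R.p w b := by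
    intro w
    unfold F
    rw [Finset.sum_mul]
    rw [Finset.sum_eq_single b]
    · rw [mul_assoc, R.idem]
    · intro a _ hab
      rw [mul_assoc, R.rowOrth w hab, mul_zero]
    · intro h; exact absurd (Finset.mem_univ b) h
  calc R.F x y * R.p z b = R.p xstar b * R.p z b := by rw [e1, red]
    _ = R.p xstar b * R.p z' b := by
        choose m hm1 hm2 using fun i => exists_ne_pair hn (z i) (xstar i)
        have key := R.pairTrade hn z j c (Ne.symm (Ne.symm hczj)) m (fun i hij => hm1 i) b
        have hv : R.p xstar b * R.p (update m j c) b = 0 := by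
          apply R.orth
          intro i
          rcases eq_or_ne i j with rfl | hij
          · rw [update_self]
            have h2 : xstar i ≠ z' i := fun h => hjS ((hx2 i).mp h)
            rwa [hz', update_self] at h2
          · rw [update_of_ne hij]; exact Ne.symm (hm2 i)
        have hv' : R.p xstar b * R.p (update m j (z j)) b = 0 := by
          apply R.orth
          intro i
          rcases eq_or_ne i j with rfl | hij
          · rw [update_self]
            have : xstar i ≠ z i := fun h => hjS ((hx1 i).mp h)
            exact this
          · rw [update_of_ne hij]; exact Ne.symm (hm2 i)
        have hmul : R.p xstar b * (R.p z b + R.p (update m j c) b)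
            = R.p xstar b * (R.p (update z j c) b + R.p (update m j (z j)) b) := by
          rw [key]
        rw [mul_add, mul_add, hv, hv', add_zero, add_zero] at hmul
        exact hmul
    _ = R.F x y * R.p z' b := by rw [e2, red]

/-- The main result. -/
lemma main (hn : 3 ≤ n) {S : Finset (Fin k)} {x y : Fin k → Fin n}
    (hxy : ∀ i, x i = y i ↔ i ∈ S) (T : Finset (Fin k)) :
    ∀ z z' : Fin k → Fin n, (∀ i ∈ S, z i = z' i) → (∀ i, i ∉ T → z i = z' i) →
    ∀ b, R.F x y * R.p z b = R.F x y * R.p z' b := by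
  induction T using Finset.induction_on with
  | empty =>
    intro z z' hS h b
    rw [funext fun i => h i (by simp)]
  | @insert j T' hj ih =>
    intro z z' hS h b
    by_cases hjS : j ∈ S
    · apply ih z z' hS ?_ b
      intro i hiT'
      rcases eq_or_ne i j with rfl | hij
      · exact hS i hjS
      · exact h i (by simp [hij, hiT'])
    · rw [R.stepB hn hxy hjS (z' j) z b]
      apply ih (update z j (z' j)) z' ?_ ?_ b
      · intro i hi
        have hij : i ≠ j := fun hh => hjS (hh ▸ hi)
        rw [update_of_ne hij]
        exact hS i hi
      · intro i hiT'
        rcases eq_or_ne i j with rfl | hij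
        · rw [update_self]
        · rw [update_of_ne hij]
          exact h i (by simp [hij, hiT'])

end QRep

end Stmt5Aux


/-- **Lemma (cool-projections (iv)).** Let `A` be a unital C*-algebra, `n ≥ 3`, `k ≥ 1`,
and `p` a representation of `Mor⁺(K_nᵏ, K_n)`. Let `S ⊆ Fin k`, let `x, y` agree exactly
on `S`, and set `Π_S := Σ_a p x a * p y a`. If `z, z'` agree on all coordinates in `S`,
then `Π_S * p z b = Π_S * p z' b` for every `b`. -/
theorem stmt5 {A : Type*} [CStarAlgebra A]
    (n k : ℕ) (hn : 3 ≤ n) (hk : 1 ≤ k)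
    (p : (Fin k → Fin n) → Fin n → A)
    (hidem : ∀ x a, p x a * p x a = p x a)
    (hsa : ∀ x a, star (p x a) = p x a)
    (hsum : ∀ x, ∑ a, p x a = 1)
    (horth : ∀ x y a, (∀ i, x i ≠ y i) → p x a * p y a = 0)
    (S : Finset (Fin k)) (x y : Fin k → Fin n)
    (hxy : ∀ i, x i = y i ↔ i ∈ S)
    (z z' : Fin k → Fin n) (hzz' : ∀ i ∈ S, z i = z' i) (b : Fin n) :
    (∑ a, p x a * p y a) * p z b = (∑ a, p x a * p y a) * p z' b := by
  let R : Stmt5Aux.QRep A n k := ⟨p, hidem, hsa, hsum, horth⟩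
  have := R.main hn hxy Finset.univ z z' hzz'
    (fun i hi => absurd (Finset.mem_univ i) hi) b
  exact this
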